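/- Let G be a graph containing exactly one 4-vertex subset that induces a complete graph K4, and let A be a minimal prison-free completion set for G. Then cmd_4(G∪A) consists of exactly one set F, and every pair in A has both of its endpoints in F. -/

import Mathlib

namespace PrisonFreePaper

variable {V : Type*}

/-- The prison graph on 5 vertices: `K₅` minus the two edges `{4,2}` and `{4,3}`
(which share the vertex `4`).  Thus `{0,1,2,3}` is a 4-clique and the vertex `4`
is adjacent exactly to `0` and `1`. -/
def prison : SimpleGraph (Fin 5) where
  Adj a b := a ≠ b ∧ ¬((a = 4 ∧ (b = 2 ∨ b = 3)) ∨ (b = 4 ∧ (a = 2 ∨ a = 3)))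
  symm := by
    constructor
    rintro a b ⟨h1, h2⟩
    exact ⟨h1.symm, by tauto⟩
  loopless := by
    constructor
    rintro a ⟨h, _⟩
    exact h rfl

/-- `P` is a 5-vertex set inducing a subgraph of `G` isomorphic to the prison. -/
def InducesPrison (G : SimpleGraph V) (P : Set V) : Prop :=
  ∃ f : Fin 5 ↪ V, Set.range f = P ∧ ∀ a b, G.Adj (f a) (f b) ↔ prison.Adj a b

/-- `G` is prison-free: no 5-vertex set induces a prison. -/
def PrisonFree (G : SimpleGraph V) : Prop :=
  ¬ ∃ P : Set V, InducesPrison G P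

/-- `P` is the set of classes witnessing that the induced subgraph `G[F]` is
complete multipartite: the classes are nonempty, pairwise disjoint, their union
is `F`, and two vertices of `F` are adjacent iff they lie in different classes. -/
def IsCMP (G : SimpleGraph V) (F : Set V) (P : Set (Set V)) : Prop :=
  (∀ C ∈ P, C.Nonempty ∧ C ⊆ F) ∧
  (⋃₀ P = F) ∧
  (∀ C ∈ P, ∀ D ∈ P, C ≠ D → Disjoint C D) ∧
  (∀ u ∈ F, ∀ v ∈ F, (G.Adj u v ↔ ¬ ∃ C ∈ P, u ∈ C ∧ v ∈ C))

/-- The induced subgraph `G[F]` is complete multipartite. -/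
def CMP (G : SimpleGraph V) (F : Set V) : Prop := ∃ P, IsCMP G F P

/-- The induced subgraph `G[F]` is complete multipartite with at least `p` classes. -/
def CMPAtLeast (G : SimpleGraph V) (F : Set V) (p : ℕ) : Prop :=
  ∃ P, IsCMP G F P ∧ ∃ f : Fin p ↪ Set V, ∀ i, f i ∈ P

/-- `F ∈ cmd_p` of the induced subgraph of `G` on the ground set `W`:
`F` is an inclusion-wise maximal subset of `W` inducing a complete multipartite
graph with at least `p` classes. -/
def Cmd (G : SimpleGraph V) (W : Set V) (p : ℕ) (F : Set V) : Prop :=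
  F ⊆ W ∧ CMPAtLeast G F p ∧
    ∀ F', F' ⊆ W → F ⊆ F' → CMPAtLeast G F' p → F' = F

/-- The neighbourhood of `v` in `G` intersects at most one class of `P`. -/
def MeetsAtMostOneClass (G : SimpleGraph V) (P : Set (Set V)) (v : V) : Prop :=
  ∀ C ∈ P, ∀ D ∈ P, (∃ x ∈ C, G.Adj v x) → (∃ y ∈ D, G.Adj v y) → C = D

/-- The induced subgraph `G[X]`, viewed as a graph on the same vertex set
(only edges with both endpoints in `X` are kept). -/
def inducedOn (G : SimpleGraph V) (X : Set V) : SimpleGraph V where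
  Adj a b := G.Adj a b ∧ a ∈ X ∧ b ∈ X
  symm := by constructor; rintro a b ⟨h, ha, hb⟩; exact ⟨h.symm, hb, ha⟩
  loopless := by constructor; rintro a ⟨h, _⟩; exact G.loopless.1 a h

/-- The set of edges of `G` with both endpoints in `X`, i.e. the edges of `G[X]`. -/
def edgesWithin (G : SimpleGraph V) (X : Set V) : Set (Sym2 V) :=
  (inducedOn G X).edgeSet

/-- `(G,k)` is a yes-instance of Prison-Free Edge Deletion. -/
def DeletionYes (G : SimpleGraph V) (k : ℕ) : Prop :=
  ∃ A : Set (Sym2 V), A ⊆ G.edgeSet ∧ A.Finite ∧ A.ncard ≤ k ∧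
    PrisonFree (G.deleteEdges A)

/-- `P` is a strict supergraph of a prison in `G`: a 5-vertex set whose induced
subgraph is `K₅` or `K₅` minus one edge (at most one non-adjacent pair). -/
def StrictSupPrison (G : SimpleGraph V) (P : Set V) : Prop :=
  P.ncard = 5 ∧ ∃ u v : V, ∀ x ∈ P, ∀ y ∈ P, x ≠ y → ¬ G.Adj x y →
    (x = u ∧ y = v) ∨ (x = v ∧ y = u)

/-- `P` is a supergraph of a prison in `G`: a 5-vertex set whose induced subgraph
contains a prison on `P` as a spanning subgraph, i.e. all non-adjacent pairs in `P`
are among two pairs sharing a common vertex. -/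
def SupPrison (G : SimpleGraph V) (P : Set V) : Prop :=
  P.ncard = 5 ∧ ∃ w u v : V, ∀ x ∈ P, ∀ y ∈ P, x ≠ y → ¬ G.Adj x y →
    (({x, y} : Set V) = {w, u} ∨ ({x, y} : Set V) = {w, v})

/-- Hypothesis (H1): every edge of `G` that does not have both endpoints in `S`
is contained in a strict supergraph of a prison in `G`. -/
def H1 (G : SimpleGraph V) (S : Set V) : Prop :=
  ∀ u v : V, G.Adj u v → ¬(u ∈ S ∧ v ∈ S) →
    ∃ P, StrictSupPrison G P ∧ u ∈ P ∧ v ∈ P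

/-- Hypothesis (H2): every 5-vertex set inducing a prison in `G` contains at least
two edges with both endpoints in `S`. -/
def H2 (G : SimpleGraph V) (S : Set V) : Prop :=
  ∀ P, InducesPrison G P →
    ∃ e₁ e₂ : Sym2 V, e₁ ≠ e₂ ∧ e₁ ∈ edgesWithin G (P ∩ S) ∧ e₂ ∈ edgesWithin G (P ∩ S)

/-- `B`: the edges of `G−S` lying in no triangle of `G−S`. -/
def BSet (G : SimpleGraph V) (S : Set V) : Set (Sym2 V) :=
  {e ∈ edgesWithin G Sᶜ | ¬ ∃ w ∈ Sᶜ, ∀ x ∈ e, G.Adj w x}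

/-- `B_e` for the edge `e = ab` of `G[S]`: the edges of `B` both of whose endpoints
are adjacent in `G` to both `a` and `b`. -/
def BOf (G : SimpleGraph V) (S : Set V) (a b : V) : Set (Sym2 V) :=
  {f ∈ BSet G S | ∀ x ∈ f, G.Adj x a ∧ G.Adj x b}

/-- `V(B_e)`: the set of endpoints of the edges of `B_e`. -/
def BVerts (G : SimpleGraph V) (S : Set V) (a b : V) : Set V :=
  {x | ∃ f ∈ BOf G S a b, x ∈ f}

/-- The graph `G ∪ A` obtained by adding the pairs in `A` as edges. -/
def addEdges (G : SimpleGraph V) (A : Set (Sym2 V)) : SimpleGraph V :=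
  G ⊔ SimpleGraph.fromEdgeSet A

/-- `A` is a prison-free completion set for `G`: a set of non-edges (unordered
pairs of distinct vertices not adjacent in `G`) whose addition makes `G` prison-free. -/
def CompletionSet (G : SimpleGraph V) (A : Set (Sym2 V)) : Prop :=
  (∀ e ∈ A, ¬ e.IsDiag) ∧ (∀ e ∈ A, e ∉ G.edgeSet) ∧ PrisonFree (addEdges G A)

/-- `A` is a minimal prison-free completion set for `G`. -/
def MinCompletionSet (G : SimpleGraph V) (A : Set (Sym2 V)) : Prop :=
  CompletionSet G A ∧ ∀ A' ⊂ A, ¬ CompletionSet G A'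

/-- `A` is a solution to the instance `(G,k)` of Prison-Free Edge Completion:
a prison-free completion set of size at most `k`. -/
def Solution (G : SimpleGraph V) (k : ℕ) (A : Set (Sym2 V)) : Prop :=
  CompletionSet G A ∧ A.Finite ∧ A.ncard ≤ k

/-- `A` is a minimal solution to `(G,k)`: a solution no proper subset of which is a
prison-free completion set. -/
def MinSolution (G : SimpleGraph V) (k : ℕ) (A : Set (Sym2 V)) : Prop :=
  Solution G k A ∧ ∀ A' ⊂ A, ¬ CompletionSet G A'

/-- `K` is a set of 4 vertices inducing a complete graph `K₄` in `G`. -/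
def IsK4 (G : SimpleGraph V) (K : Set V) : Prop :=
  K.ncard = 4 ∧ ∀ u ∈ K, ∀ v ∈ K, u ≠ v → G.Adj u v

/-- The modulator property of the set `S` (output of the sunflower-based
Lemma): for every prison `P` in `G` and every edge set `A ⊆ E(G)` with `|A| ≤ k`,
if deleting `A` from `G[S]` yields a prison-free graph then `A` contains an edge
of `G[P]`. -/
def GoodModulator (G : SimpleGraph V) (k : ℕ) (S : Set V) : Prop :=
  ∀ P : Set V, InducesPrison G P →
    ∀ A : Set (Sym2 V), A ⊆ G.edgeSet → A.Finite → A.ncard ≤ k →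
      PrisonFree ((inducedOn G S).deleteEdges A) →
      ∃ e ∈ A, e ∈ edgesWithin G P

/-- Hypothesis (H3): for every `F' ∈ cmd₃(G−S)` and every inclusion-wise maximal
set `F ⊇ F'` such that `G[F]` is complete multipartite, some vertex outside `F`
has neighbours in at least two classes of `F`. -/
def H3 (G : SimpleGraph V) (S : Set V) : Prop :=
  ∀ F', Cmd G Sᶜ 3 F' → ∀ F : Set V, F' ⊆ F → CMP G F →
    (∀ F'', F ⊆ F'' → CMP G F'' → F'' = F) →
    ∃ v ∉ F, ∃ P, IsCMP G F P ∧
      ∃ C ∈ P, ∃ D ∈ P, C ≠ D ∧ (∃ x ∈ C, G.Adj v x) ∧ ∃ y ∈ D, G.Adj v y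

/-- `F` is an inclusion-wise maximal subset of `W` inducing a complete
multipartite subgraph of `G`. -/
def MaxCMPon (G : SimpleGraph V) (W F : Set V) : Prop :=
  F ⊆ W ∧ CMP G F ∧ ∀ F'', F'' ⊆ W → F ⊆ F'' → CMP G F'' → F'' = F


instance prison.adjDecidable : DecidableRel prison.Adj := fun a b =>
  decidable_of_iff (a ≠ b ∧ ¬((a = 4 ∧ (b = 2 ∨ b = 3)) ∨ (b = 4 ∧ (a = 2 ∨ a = 3))))
    Iff.rfl
lemma no_prison_config (H : SimpleGraph V) (hPF : PrisonFree H) (p q r s v : V)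
    (hpq : H.Adj p q) (hpr : H.Adj p r) (hps : H.Adj p s) (hqr : H.Adj q r)
    (hqs : H.Adj q s) (hrs : H.Adj r s)
    (hvp : H.Adj v p) (hvq : H.Adj v q) (hvr : ¬H.Adj v r) (hvs : ¬H.Adj v s)
    (hvr' : v ≠ r) (hvs' : v ≠ s) : False := by
  have hinj : Function.Injective (![p, q, r, s, v] : Fin 5 → V) := by
    have h1 := hpq.ne; have h2 := hpr.ne; have h3 := hps.ne
    have h4 := hqr.ne; have h5 := hqs.ne; have h6 := hrs.ne
    have h7 := hvp.ne; have h8 := hvq.ne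
    intro i j hij
    fin_cases i <;> fin_cases j <;> simp_all
  apply hPF
  refine ⟨_, ⟨![p, q, r, s, v], hinj⟩, rfl, ?_⟩
  intro a b
  have s1 := hpq.symm; have s2 := hpr.symm; have s3 := hps.symm
  have s4 := hqr.symm; have s5 := hqs.symm; have s6 := hrs.symm
  have s7 := hvp.symm; have s8 := hvq.symm
  have hvr2 : ¬ H.Adj r v := fun h => hvr h.symm
  have hvs2 : ¬ H.Adj s v := fun h => hvs h.symm
  have i1 : ¬ H.Adj p p := H.irrefl
  have i2 : ¬ H.Adj q q := H.irrefl
  have i3 : ¬ H.Adj r r := H.irrefl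
  have i4 : ¬ H.Adj s s := H.irrefl
  have i5 : ¬ H.Adj v v := H.irrefl
  fin_cases a <;> fin_cases b <;>
    simp_all [prison, Function.Embedding.coeFn_mk]

lemma IsCMP.mem_class {H : SimpleGraph V} {F : Set V} {P : Set (Set V)}
    (hP : IsCMP H F P) {u : V} (hu : u ∈ F) : ∃ C ∈ P, u ∈ C := by
  have h := hP.2.1
  rw [← h] at hu
  rcases hu with ⟨C, hC, huC⟩
  exact ⟨C, hC, huC⟩

lemma IsCMP.class_eq {H : SimpleGraph V} {F : Set V} {P : Set (Set V)}
    (hP : IsCMP H F P) {u : V} {C D : Set V} (hC : C ∈ P) (hD : D ∈ P)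
    (huC : u ∈ C) (huD : u ∈ D) : C = D := by
  by_contra h
  exact absurd huD (Set.disjoint_left.mp (hP.2.2.1 C hC D hD h) huC)

lemma IsCMP.adj_of_ne {H : SimpleGraph V} {F : Set V} {P : Set (Set V)}
    (hP : IsCMP H F P) {u w : V} {C D : Set V} (hC : C ∈ P) (hD : D ∈ P)
    (hu : u ∈ C) (hw : w ∈ D) (hne : C ≠ D) : H.Adj u w := by
  have huF : u ∈ F := (hP.1 C hC).2 hu
  have hwF : w ∈ F := (hP.1 D hD).2 hw
  rw [hP.2.2.2 u huF w hwF]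
  rintro ⟨E, hE, huE, hwE⟩
  exact hne ((hP.class_eq hC hE hu huE).trans (hP.class_eq hE hD hwE hw))

lemma IsCMP.not_adj {H : SimpleGraph V} {F : Set V} {P : Set (Set V)}
    (hP : IsCMP H F P) {u w : V} {C : Set V} (hC : C ∈ P) (hu : u ∈ C) (hw : w ∈ C) :
    ¬ H.Adj u w := by
  have huF : u ∈ F := (hP.1 C hC).2 hu
  have hwF : w ∈ F := (hP.1 C hC).2 hw
  rw [hP.2.2.2 u huF w hwF]
  exact not_not_intro ⟨C, hC, hu, hw⟩

lemma pick_one (f : Fin 4 ↪ Set V) (s t r : Set V) :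
    ∃ i, f i ≠ s ∧ f i ≠ t ∧ f i ≠ r := by
  classical
  by_contra h
  push_neg at h
  have hmem : ∀ i : Fin 4, f i ∈ ({s, t, r} : Finset (Set V)) := by
    intro i
    by_cases h1 : f i = s
    · simp [h1]
    · by_cases h2 : f i = t
      · simp [h2]
      · simp [h i h1 h2]
  have hcard := Finset.card_le_card_of_injOn (s := Finset.univ) (t := ({s, t, r} : Finset (Set V))) f (fun i _ => hmem i)
    (f.injective.injOn)
  have h4 : (Finset.univ : Finset (Fin 4)).card = 4 := by simp
  have h3 : ({s, t, r} : Finset (Set V)).card ≤ 3 := by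
    have e1 := Finset.card_insert_le s ({t, r} : Finset (Set V))
    have e2 := Finset.card_insert_le t ({r} : Finset (Set V))
    have e3 : ({r} : Finset (Set V)).card = 1 := Finset.card_singleton r
    omega
  omega

lemma pick_two (f : Fin 4 ↪ Set V) (s t : Set V) :
    ∃ i j : Fin 4, f i ≠ s ∧ f i ≠ t ∧ f j ≠ s ∧ f j ≠ t ∧ f i ≠ f j := by
  classical
  set S : Finset (Fin 4) := Finset.univ.filter (fun i => f i = s ∨ f i = t) with hS
  have hScard : S.card ≤ 2 := by
    have hmem : ∀ i ∈ S, f i ∈ ({s, t} : Finset (Set V)) := by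
      intro i hi
      rcases (Finset.mem_filter.mp hi).2 with h | h <;> simp [h]
    have := Finset.card_le_card_of_injOn (t := ({s, t} : Finset (Set V))) f hmem (f.injective.injOn)
    have h2 : ({s, t} : Finset (Set V)).card ≤ 2 := by
      apply le_trans (Finset.card_insert_le _ _); simp
    omega
  have hcompl : 2 ≤ (Finset.univ \ S).card := by
    have := Finset.card_sdiff_of_subset (Finset.subset_univ S)
    have h4 : (Finset.univ : Finset (Fin 4)).card = 4 := by simp
    omega
  obtain ⟨i, hi, j, hj, hij⟩ := Finset.one_lt_card.mp (by omega : 1 < (Finset.univ \ S).card)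
  have hi' : ¬ (f i = s ∨ f i = t) := by
    intro h
    exact (Finset.mem_sdiff.mp hi).2 (Finset.mem_filter.mpr ⟨Finset.mem_univ _, h⟩)
  have hj' : ¬ (f j = s ∨ f j = t) := by
    intro h
    exact (Finset.mem_sdiff.mp hj).2 (Finset.mem_filter.mpr ⟨Finset.mem_univ _, h⟩)
  push_neg at hi' hj'
  exact ⟨i, j, hi'.1, hi'.2, hj'.1, hj'.2, fun h => hij (f.injective h)⟩
lemma key2a (H : SimpleGraph V) (hPF : PrisonFree H) (F : Set V) (P : Set (Set V))
    (hP : IsCMP H F P) (g : Fin 4 ↪ Set V) (hg : ∀ i, g i ∈ P)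
    (v : V) (hv : v ∉ F)
    (C0 Cu Cy : Set V) (hC0 : C0 ∈ P) (hCu : Cu ∈ P) (hCy : Cy ∈ P)
    (h0u : C0 ≠ Cu) (h0y : C0 ≠ Cy) (huy : Cu ≠ Cy)
    (x a u y : V) (hx : x ∈ C0) (ha : a ∈ C0) (hu : u ∈ Cu) (hy : y ∈ Cy)
    (hvx : H.Adj v x) (hvy : H.Adj v y) (hva : ¬ H.Adj v a) (hvu : ¬ H.Adj v u) :
    False := by
  obtain ⟨i, hi0, hiu, hiy⟩ := pick_one g C0 Cu Cy
  have hZ : g i ∈ P := hg i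
  obtain ⟨z, hz⟩ := (hP.1 _ hZ).1
  have hva' : v ≠ a := fun h => hv (h ▸ (hP.1 _ hC0).2 ha)
  have hvu' : v ≠ u := fun h => hv (h ▸ (hP.1 _ hCu).2 hu)
  have hvz' : v ≠ z := fun h => hv (h ▸ (hP.1 _ hZ).2 hz)
  by_cases hvz : H.Adj v z
  · exact no_prison_config H hPF z y a u v
      (hP.adj_of_ne hZ hCy hz hy hiy)
      (hP.adj_of_ne hZ hC0 hz ha hi0)
      (hP.adj_of_ne hZ hCu hz hu hiu)
      (hP.adj_of_ne hCy hC0 hy ha (fun h => h0y h.symm))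
      (hP.adj_of_ne hCy hCu hy hu (fun h => huy h.symm))
      (hP.adj_of_ne hC0 hCu ha hu h0u)
      hvz hvy hva hvu hva' hvu'
  · exact no_prison_config H hPF x y u z v
      (hP.adj_of_ne hC0 hCy hx hy h0y)
      (hP.adj_of_ne hC0 hCu hx hu h0u)
      (hP.adj_of_ne hC0 hZ hx hz (fun h => hi0 h.symm))
      (hP.adj_of_ne hCy hCu hy hu (fun h => huy h.symm))
      (hP.adj_of_ne hCy hZ hy hz (fun h => hiy h.symm))
      (hP.adj_of_ne hCu hZ hu hz (fun h => hiu h.symm))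
      hvx hvy hvu hvz hvu' hvz'

lemma key2b (H : SimpleGraph V) (hPF : PrisonFree H) (F : Set V) (P : Set (Set V))
    (hP : IsCMP H F P) (g : Fin 4 ↪ Set V) (hg : ∀ i, g i ∈ P)
    (v : V) (hv : v ∉ F)
    (C0 C1 : Set V) (hC0 : C0 ∈ P) (hC1 : C1 ∈ P) (h01 : C0 ≠ C1)
    (x a y u : V) (hx : x ∈ C0) (ha : a ∈ C0) (hy : y ∈ C1) (hu : u ∈ C1)
    (hvx : H.Adj v x) (hvy : H.Adj v y) (hva : ¬ H.Adj v a) (hvu : ¬ H.Adj v u) :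
    False := by
  obtain ⟨i, j, hi0, hi1, hj0, hj1, hij⟩ := pick_two g C0 C1
  have hZi : g i ∈ P := hg i
  have hZj : g j ∈ P := hg j
  obtain ⟨z1, hz1⟩ := (hP.1 _ hZi).1
  obtain ⟨z2, hz2⟩ := (hP.1 _ hZj).1
  have hva' : v ≠ a := fun h => hv (h ▸ (hP.1 _ hC0).2 ha)
  have hvu' : v ≠ u := fun h => hv (h ▸ (hP.1 _ hC1).2 hu)
  have hvz1' : v ≠ z1 := fun h => hv (h ▸ (hP.1 _ hZi).2 hz1)
  have hvz2' : v ≠ z2 := fun h => hv (h ▸ (hP.1 _ hZj).2 hz2)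
  by_cases h1 : H.Adj v z1
  · by_cases h2 : H.Adj v z2
    · exact no_prison_config H hPF z1 z2 a u v
        (hP.adj_of_ne hZi hZj hz1 hz2 hij)
        (hP.adj_of_ne hZi hC0 hz1 ha hi0)
        (hP.adj_of_ne hZi hC1 hz1 hu hi1)
        (hP.adj_of_ne hZj hC0 hz2 ha hj0)
        (hP.adj_of_ne hZj hC1 hz2 hu hj1)
        (hP.adj_of_ne hC0 hC1 ha hu h01)
        h1 h2 hva hvu hva' hvu'
    · exact no_prison_config H hPF x z1 u z2 v
        (hP.adj_of_ne hC0 hZi hx hz1 (fun h => hi0 h.symm))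
        (hP.adj_of_ne hC0 hC1 hx hu h01)
        (hP.adj_of_ne hC0 hZj hx hz2 (fun h => hj0 h.symm))
        (hP.adj_of_ne hZi hC1 hz1 hu hi1)
        (hP.adj_of_ne hZi hZj hz1 hz2 hij)
        (hP.adj_of_ne hC1 hZj hu hz2 (fun h => hj1 h.symm))
        hvx h1 hvu h2 hvu' hvz2'
  · by_cases h2 : H.Adj v z2
    · exact no_prison_config H hPF x z2 u z1 v
        (hP.adj_of_ne hC0 hZj hx hz2 (fun h => hj0 h.symm))
        (hP.adj_of_ne hC0 hC1 hx hu h01)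
        (hP.adj_of_ne hC0 hZi hx hz1 (fun h => hi0 h.symm))
        (hP.adj_of_ne hZj hC1 hz2 hu hj1)
        (hP.adj_of_ne hZj hZi hz2 hz1 (fun h => hij h.symm))
        (hP.adj_of_ne hC1 hZi hu hz1 (fun h => hi1 h.symm))
        hvx h2 hvu h1 hvu' hvz1'
    · exact no_prison_config H hPF x y z1 z2 v
        (hP.adj_of_ne hC0 hC1 hx hy h01)
        (hP.adj_of_ne hC0 hZi hx hz1 (fun h => hi0 h.symm))
        (hP.adj_of_ne hC0 hZj hx hz2 (fun h => hj0 h.symm))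
        (hP.adj_of_ne hC1 hZi hy hz1 (fun h => hi1 h.symm))
        (hP.adj_of_ne hC1 hZj hy hz2 (fun h => hj1 h.symm))
        (hP.adj_of_ne hZi hZj hz1 hz2 hij)
        hvx hvy h1 h2 hvz1' hvz2'

lemma key (H : SimpleGraph V) (hPF : PrisonFree H) (F : Set V) (P : Set (Set V))
    (hP : IsCMP H F P) (g : Fin 4 ↪ Set V) (hg : ∀ i, g i ∈ P)
    (v : V) (hv : v ∉ F)
    (Cx Cy Ca Cu : Set V) (hCx : Cx ∈ P) (hCy : Cy ∈ P) (hCa : Ca ∈ P) (hCu : Cu ∈ P)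
    (x y a u : V) (hx : x ∈ Cx) (hy : y ∈ Cy) (ha : a ∈ Ca) (hu : u ∈ Cu)
    (hxy : Cx ≠ Cy) (hau : Ca ≠ Cu)
    (hvx : H.Adj v x) (hvy : H.Adj v y) (hva : ¬ H.Adj v a) (hvu : ¬ H.Adj v u) :
    False := by
  by_cases h1 : Cx = Ca
  · have ha' : a ∈ Cx := h1.symm ▸ ha
    by_cases h2 : Cy = Cu
    · have hu' : u ∈ Cy := h2.symm ▸ hu
      exact key2b H hPF F P hP g hg v hv Cx Cy hCx hCy hxy x a y u hx ha' hy hu'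
        hvx hvy hva hvu
    · have h0u : Cx ≠ Cu := fun h => hau (h1.symm.trans h)
      exact key2a H hPF F P hP g hg v hv Cx Cu Cy hCx hCu hCy h0u hxy
        (fun h => h2 h.symm) x a u y hx ha' hu hy hvx hvy hva hvu
  · by_cases h2 : Cx = Cu
    · have hu' : u ∈ Cx := h2.symm ▸ hu
      by_cases h3 : Cy = Ca
      · have ha' : a ∈ Cy := h3.symm ▸ ha
        exact key2b H hPF F P hP g hg v hv Cx Cy hCx hCy hxy x u y a hx hu' hy ha'
          hvx hvy hvu hva
      · exact key2a H hPF F P hP g hg v hv Cx Ca Cy hCx hCa hCy h1 hxy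
          (fun h => h3 h.symm) x u a y hx hu' ha hy hvx hvy hvu hva
    · by_cases h3 : Cy = Ca
      · have ha' : a ∈ Cy := h3.symm ▸ ha
        have hyu : Cy ≠ Cu := fun h => hau (h3.symm.trans h)
        exact key2a H hPF F P hP g hg v hv Cy Cu Cx hCy hCu hCx hyu (Ne.symm hxy)
          (fun h => h2 h.symm) y a u x hy ha' hu hx hvy hvx hva hvu
      · by_cases h4 : Cy = Cu
        · have hu' : u ∈ Cy := h4.symm ▸ hu
          have hya : Cy ≠ Ca := h3
          exact key2a H hPF F P hP g hg v hv Cy Ca Cx hCy hCa hCx hya (Ne.symm hxy)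
            (fun h => h1 h.symm) y u a x hy hu' ha hx hvy hvx hvu hva
        · have hva' : v ≠ a := fun h => hv (h ▸ (hP.1 _ hCa).2 ha)
          have hvu' : v ≠ u := fun h => hv (h ▸ (hP.1 _ hCu).2 hu)
          exact no_prison_config H hPF x y a u v
            (hP.adj_of_ne hCx hCy hx hy hxy)
            (hP.adj_of_ne hCx hCa hx ha h1)
            (hP.adj_of_ne hCx hCu hx hu h2)
            (hP.adj_of_ne hCy hCa hy ha h3)
            (hP.adj_of_ne hCy hCu hy hu h4)
            (hP.adj_of_ne hCa hCu ha hu hau)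
            hvx hvy hva hvu hva' hvu'
lemma absorb_step (H : SimpleGraph V) (hPF : PrisonFree H) (F : Set V) (P : Set (Set V))
    (hP : IsCMP H F P) (g : Fin 4 ↪ Set V) (hg : ∀ i, g i ∈ P)
    (v : V) (hv : v ∉ F) (C D : Set V) (hC : C ∈ P) (hD : D ∈ P) (hCD : C ≠ D)
    (x y : V) (hxC : x ∈ C) (hyD : y ∈ D) (hvx : H.Adj v x) (hvy : H.Adj v y) :
    CMPAtLeast H (insert v F) 4 := by
  classical
  by_cases hall : ∀ u ∈ F, H.Adj v u
  · refine ⟨insert {v} P, ⟨?_, ?_, ?_, ?_⟩, g, fun i => Set.mem_insert_of_mem _ (hg i)⟩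
    · intro C' hC'
      rcases Set.mem_insert_iff.mp hC' with rfl | hC'
      · exact ⟨⟨v, rfl⟩, by simp⟩
      · exact ⟨(hP.1 C' hC').1, (hP.1 C' hC').2.trans (Set.subset_insert _ _)⟩
    · rw [Set.sUnion_insert, hP.2.1, Set.singleton_union]
    · intro C' hC' D' hD' hne
      rcases Set.mem_insert_iff.mp hC' with rfl | hC'
      · rcases Set.mem_insert_iff.mp hD' with rfl | hD'
        · exact absurd rfl hne
        · exact Set.disjoint_singleton_left.mpr (fun h => hv ((hP.1 D' hD').2 h))
      · rcases Set.mem_insert_iff.mp hD' with rfl | hD'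
        · exact Set.disjoint_singleton_right.mpr (fun h => hv ((hP.1 C' hC').2 h))
        · exact hP.2.2.1 C' hC' D' hD' hne
    · intro u hu w hw
      rcases Set.mem_insert_iff.mp hu with rfl | huF
      · rcases Set.mem_insert_iff.mp hw with rfl | hwF
        · exact iff_of_false H.irrefl
            (not_not_intro ⟨{w}, Set.mem_insert _ _, rfl, rfl⟩)
        · refine iff_of_true (hall w hwF) ?_
          rintro ⟨E, hE, hvE, hwE⟩
          rcases Set.mem_insert_iff.mp hE with rfl | hE'
          · exact hv (Set.mem_singleton_iff.mp hwE ▸ hwF)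
          · exact hv ((hP.1 _ hE').2 hvE)
      · rcases Set.mem_insert_iff.mp hw with rfl | hwF
        · refine iff_of_true ((hall u huF).symm) ?_
          rintro ⟨E, hE, huE, hwE⟩
          rcases Set.mem_insert_iff.mp hE with rfl | hE'
          · exact hv (Set.mem_singleton_iff.mp huE ▸ huF)
          · exact hv ((hP.1 _ hE').2 hwE)
        · rw [hP.2.2.2 u huF w hwF]
          apply not_congr
          constructor
          · rintro ⟨E, hE, h1, h2⟩
            exact ⟨E, Set.mem_insert_of_mem _ hE, h1, h2⟩
          · rintro ⟨E, hE, h1, h2⟩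
            rcases Set.mem_insert_iff.mp hE with rfl | hE'
            · exact absurd (Set.mem_singleton_iff.mp h1 ▸ huF) hv
            · exact ⟨E, hE', h1, h2⟩
  · push_neg at hall
    obtain ⟨a, haF, hva⟩ := hall
    obtain ⟨Ca, hCa, haCa⟩ := hP.mem_class haF
    have B1 : ∀ u ∈ F, ¬ H.Adj v u → u ∈ Ca := by
      intro u huF hvu
      obtain ⟨Cu, hCu, huCu⟩ := hP.mem_class huF
      by_cases hq : Cu = Ca
      · exact hq ▸ huCu
      · exact (key H hPF F P hP g hg v hv C D Ca Cu hC hD hCa hCu x y a u hxC hyD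
          haCa huCu hCD (Ne.symm hq) hvx hvy hva hvu).elim
    have B2 : ∀ c ∈ Ca, ¬ H.Adj v c := by
      intro c hcCa hvc
      obtain ⟨i, j, hi1, _, hj1, _, hij⟩ := pick_two g Ca Ca
      obtain ⟨z1, hz1⟩ := (hP.1 _ (hg i)).1
      obtain ⟨z2, hz2⟩ := (hP.1 _ (hg j)).1
      have hz1F : z1 ∈ F := (hP.1 _ (hg i)).2 hz1
      have hz2F : z2 ∈ F := (hP.1 _ (hg j)).2 hz2
      have az1 : H.Adj v z1 := by
        by_contra hcon
        exact hi1 (hP.class_eq (hg i) hCa hz1 (B1 z1 hz1F hcon))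
      have az2 : H.Adj v z2 := by
        by_contra hcon
        exact hj1 (hP.class_eq (hg j) hCa hz2 (B1 z2 hz2F hcon))
      have hac : a ≠ c := by rintro rfl; exact hva hvc
      have hav : a ≠ v := by rintro rfl; exact hv haF
      exact no_prison_config H hPF z1 z2 c v a
        (hP.adj_of_ne (hg i) (hg j) hz1 hz2 hij)
        (hP.adj_of_ne (hg i) hCa hz1 hcCa hi1)
        az1.symm
        (hP.adj_of_ne (hg j) hCa hz2 hcCa hj1)
        az2.symm
        hvc.symm
        (hP.adj_of_ne hCa (hg i) haCa hz1 (Ne.symm hi1))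
        (hP.adj_of_ne hCa (hg j) haCa hz2 (Ne.symm hj1))
        (hP.not_adj hCa haCa hcCa)
        (fun h => hva h.symm)
        hac hav
    refine ⟨insert (insert v Ca) (P \ {Ca}), ⟨?_, ?_, ?_, ?_⟩,
      ⟨fun i => if g i = Ca then insert v Ca else g i, ?_⟩, ?_⟩
    · intro C' hC'
      rcases Set.mem_insert_iff.mp hC' with rfl | hC'
      · exact ⟨⟨v, Set.mem_insert _ _⟩, Set.insert_subset_insert (hP.1 _ hCa).2⟩
      · exact ⟨(hP.1 C' hC'.1).1, ((hP.1 C' hC'.1).2).trans (Set.subset_insert _ _)⟩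
    · rw [Set.sUnion_insert]
      ext w
      constructor
      · intro hw
        rcases (Set.mem_union _ _ _).mp hw with h | ⟨E, hE, hwE⟩
        · rcases Set.mem_insert_iff.mp h with rfl | h
          · exact Set.mem_insert _ _
          · exact Set.mem_insert_of_mem _ ((hP.1 _ hCa).2 h)
        · exact Set.mem_insert_of_mem _ ((hP.1 _ hE.1).2 hwE)
      · intro hw
        rcases Set.mem_insert_iff.mp hw with rfl | hwF
        · exact Set.mem_union_left _ (Set.mem_insert _ _)
        · obtain ⟨E, hE, hwE⟩ := hP.mem_class hwF
          by_cases hE' : E = Ca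
          · exact Set.mem_union_left _ (Set.mem_insert_of_mem _ (hE' ▸ hwE))
          · exact Set.mem_union_right _
              ⟨E, (Set.mem_diff E).mpr ⟨hE, fun h => hE' (Set.mem_singleton_iff.mp h)⟩, hwE⟩
    · have hdisj : ∀ E ∈ P \ {Ca}, Disjoint (insert v Ca) E := by
        intro E hE
        refine Set.disjoint_left.mpr ?_
        intro w hw hwE
        rcases Set.mem_insert_iff.mp hw with rfl | hwCa
        · exact hv ((hP.1 _ hE.1).2 hwE)
        · exact Set.disjoint_left.mp
            (hP.2.2.1 Ca hCa E hE.1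
              (fun h => hE.2 (Set.mem_singleton_iff.mpr h.symm))) hwCa hwE
      intro C' hC' D' hD' hne
      rcases Set.mem_insert_iff.mp hC' with rfl | hC'
      · rcases Set.mem_insert_iff.mp hD' with rfl | hD'
        · exact absurd rfl hne
        · exact hdisj D' hD'
      · rcases Set.mem_insert_iff.mp hD' with rfl | hD'
        · exact (hdisj C' hC').symm
        · exact hP.2.2.1 C' hC'.1 D' hD'.1 hne
    · intro u hu w hw
      rcases Set.mem_insert_iff.mp hu with rfl | huF
      · rcases Set.mem_insert_iff.mp hw with rfl | hwF
        · exact iff_of_false H.irrefl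
            (not_not_intro ⟨insert w Ca, Set.mem_insert _ _, Set.mem_insert _ _,
              Set.mem_insert _ _⟩)
        · by_cases hwCa : w ∈ Ca
          · exact iff_of_false (B2 w hwCa)
              (not_not_intro ⟨insert u Ca, Set.mem_insert _ _, Set.mem_insert _ _,
                Set.mem_insert_of_mem _ hwCa⟩)
          · refine iff_of_true ?_ ?_
            · by_contra hcon
              exact hwCa (B1 w hwF hcon)
            · rintro ⟨E, hE, hvE, hwE⟩
              rcases Set.mem_insert_iff.mp hE with rfl | hE'
              · rcases Set.mem_insert_iff.mp hwE with rfl | hwCa'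
                · exact hv hwF
                · exact hwCa hwCa'
              · exact hv ((hP.1 _ hE'.1).2 hvE)
      · rcases Set.mem_insert_iff.mp hw with rfl | hwF
        · by_cases huCa : u ∈ Ca
          · exact iff_of_false (fun h => B2 u huCa h.symm)
              (not_not_intro ⟨insert w Ca, Set.mem_insert _ _,
                Set.mem_insert_of_mem _ huCa, Set.mem_insert _ _⟩)
          · refine iff_of_true ?_ ?_
            · by_contra hcon
              exact huCa (B1 u huF (fun h => hcon h.symm))
            · rintro ⟨E, hE, huE, hwE⟩
              rcases Set.mem_insert_iff.mp hE with rfl | hE'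
              · rcases Set.mem_insert_iff.mp huE with rfl | huCa'
                · exact hv huF
                · exact huCa huCa'
              · exact hv ((hP.1 _ hE'.1).2 hwE)
        · rw [hP.2.2.2 u huF w hwF]
          apply not_congr
          constructor
          · rintro ⟨E, hE, h1, h2⟩
            by_cases hE' : E = Ca
            · subst hE'
              exact ⟨insert v E, Set.mem_insert _ _, Set.mem_insert_of_mem _ h1,
                Set.mem_insert_of_mem _ h2⟩
            · exact ⟨E, Set.mem_insert_of_mem _
                ((Set.mem_diff E).mpr ⟨hE, fun h => hE' (Set.mem_singleton_iff.mp h)⟩),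
                h1, h2⟩
          · rintro ⟨E, hE, h1, h2⟩
            rcases Set.mem_insert_iff.mp hE with rfl | hE'
            · rcases Set.mem_insert_iff.mp h1 with rfl | h1'
              · exact absurd huF hv
              · rcases Set.mem_insert_iff.mp h2 with rfl | h2'
                · exact absurd hwF hv
                · exact ⟨Ca, hCa, h1', h2'⟩
            · exact ⟨E, hE'.1, h1, h2⟩
    · intro i j hij
      simp only at hij
      by_cases hi : g i = Ca <;> by_cases hj : g j = Ca
      · exact g.injective (hi.trans hj.symm)
      · rw [if_pos hi, if_neg hj] at hij
        exact absurd (hij ▸ Set.mem_insert v Ca) (fun h => hv ((hP.1 _ (hg j)).2 h))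
      · rw [if_neg hi, if_pos hj] at hij
        exact absurd (hij.symm ▸ Set.mem_insert v Ca) (fun h => hv ((hP.1 _ (hg i)).2 h))
      · rw [if_neg hi, if_neg hj] at hij
        exact g.injective hij
    · intro i
      show (if g i = Ca then insert v Ca else g i) ∈ insert (insert v Ca) (P \ {Ca})
      by_cases hi : g i = Ca
      · rw [if_pos hi]
        exact Set.mem_insert _ _
      · rw [if_neg hi]
        exact Set.mem_insert_of_mem _
          ((Set.mem_diff _).mpr ⟨hg i, fun h => hi (Set.mem_singleton_iff.mp h)⟩)

lemma absorb_max (H : SimpleGraph V) (hPF : PrisonFree H) (F : Set V)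
    (hF : CMPAtLeast H F 4)
    (hmax : ∀ F'', F'' ⊆ Set.univ → F ⊆ F'' → CMPAtLeast H F'' 4 → F'' = F)
    (v x y : V) (hx : x ∈ F) (hy : y ∈ F) (hxy : H.Adj x y)
    (hvx : H.Adj v x) (hvy : H.Adj v y) : v ∈ F := by
  by_contra hv
  obtain ⟨P, hP, f4, hf4⟩ := hF
  obtain ⟨Cx, hCx, hxC⟩ := hP.mem_class hx
  obtain ⟨Dy, hDy, hyD⟩ := hP.mem_class hy
  have hCD : Cx ≠ Dy := by
    rintro rfl
    exact hP.not_adj hCx hxC hyD hxy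
  have h := absorb_step H hPF F P hP f4 hf4 v hv Cx Dy hCx hDy hCD x y hxC hyD hvx hvy
  have heq := hmax (insert v F) (Set.subset_univ _) (Set.subset_insert _ _) h
  exact hv (heq ▸ Set.mem_insert v F)
lemma ncard_four {a b c d : V} (hab : a ≠ b) (hac : a ≠ c) (had : a ≠ d)
    (hbc : b ≠ c) (hbd : b ≠ d) (hcd : c ≠ d) :
    ({a, b, c, d} : Set V).ncard = 4 := by
  rw [Set.ncard_insert_of_notMem (by simp [hab, hac, had])
      (((Set.finite_singleton d).insert c).insert b),
    Set.ncard_insert_of_notMem (by simp [hbc, hbd]) ((Set.finite_singleton d).insert c),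
    Set.ncard_insert_of_notMem (by simp [hcd]) (Set.finite_singleton d),
    Set.ncard_singleton]

lemma eq_four_of_ncard {K : Set V} (hfin : K.Finite) (h : K.ncard = 4) :
    ∃ a b c d : V, a ≠ b ∧ a ≠ c ∧ a ≠ d ∧ b ≠ c ∧ b ≠ d ∧ c ≠ d ∧
      K = {a, b, c, d} := by
  have hne : K.Nonempty := by
    rw [← Set.ncard_pos hfin]
    omega
  obtain ⟨a, ha⟩ := hne
  have h3 : (K \ {a}).ncard = 3 := by
    rw [Set.ncard_diff_singleton_of_mem ha]
    omega
  obtain ⟨b, c, d, hbc, hbd, hcd, heq⟩ := Set.ncard_eq_three.mp h3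
  have hb : b ∈ K \ {a} := by rw [heq]; exact Set.mem_insert _ _
  have hc : c ∈ K \ {a} := by rw [heq]; simp
  have hd : d ∈ K \ {a} := by rw [heq]; simp
  have hKeq : K = insert a (K \ {a}) := by
    rw [Set.insert_diff_singleton, Set.insert_eq_self.mpr ha]
  refine ⟨a, b, c, d,
    fun h => hb.2 (Set.mem_singleton_iff.mpr h.symm),
    fun h => hc.2 (Set.mem_singleton_iff.mpr h.symm),
    fun h => hd.2 (Set.mem_singleton_iff.mpr h.symm),
    hbc, hbd, hcd, ?_⟩
  rw [hKeq, heq]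

lemma cmpAtLeast_of_isK4 (H : SimpleGraph V) (K : Set V) (hfin : K.Finite)
    (hK : IsK4 H K) : CMPAtLeast H K 4 := by
  obtain ⟨a, b, c, d, hab, hac, had, hbc, hbd, hcd, rfl⟩ := eq_four_of_ncard hfin hK.1
  refine ⟨{{a}, {b}, {c}, {d}}, ⟨?_, ?_, ?_, ?_⟩, ⟨![{a}, {b}, {c}, {d}], ?_⟩, ?_⟩
  · intro C' hC'
    simp only [Set.mem_insert_iff, Set.mem_singleton_iff] at hC'
    rcases hC' with rfl | rfl | rfl | rfl <;> exact ⟨⟨_, rfl⟩, by simp⟩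
  · rw [Set.sUnion_insert, Set.sUnion_insert, Set.sUnion_insert, Set.sUnion_singleton,
      Set.singleton_union, Set.singleton_union, Set.singleton_union]
  · intro C' hC' D' hD' hne
    simp only [Set.mem_insert_iff, Set.mem_singleton_iff] at hC' hD'
    rcases hC' with rfl | rfl | rfl | rfl <;> rcases hD' with rfl | rfl | rfl | rfl <;>
      first
        | exact absurd rfl hne
        | (refine Set.disjoint_singleton.mpr ?_
           intro h
           first
             | exact hab h | exact hab h.symm | exact hac h | exact hac h.symm
             | exact had h | exact had h.symm | exact hbc h | exact hbc h.symm
             | exact hbd h | exact hbd h.symm | exact hcd h | exact hcd h.symm)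
  · intro u hu w hw
    constructor
    · rintro hadj ⟨E, hE, h1, h2⟩
      simp only [Set.mem_insert_iff, Set.mem_singleton_iff] at hE
      rcases hE with rfl | rfl | rfl | rfl <;>
        rw [Set.mem_singleton_iff] at h1 h2 <;> subst h1 <;> subst h2 <;>
          exact hadj.ne rfl
    · intro hnex
      refine hK.2 u hu w hw ?_
      rintro rfl
      simp only [Set.mem_insert_iff, Set.mem_singleton_iff] at hu
      rcases hu with rfl | rfl | rfl | rfl
      · exact hnex ⟨{u}, by simp, rfl, rfl⟩
      · exact hnex ⟨{u}, by simp, rfl, rfl⟩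
      · exact hnex ⟨{u}, by simp, rfl, rfl⟩
      · exact hnex ⟨{u}, by simp, rfl, rfl⟩
  · intro i j hij
    fin_cases i <;> fin_cases j <;>
      simp_all [Set.singleton_eq_singleton_iff]
  · intro i
    fin_cases i <;> simp
    · exact Or.inl rfl
    · exact Or.inr (Or.inl rfl)
    · exact Or.inr (Or.inr (Or.inl rfl))
    · exact Or.inr (Or.inr (Or.inr rfl))
/-- If `G` has exactly one 4-vertex set inducing `K₄` and `A` is a
minimal prison-free completion set for `G`, then `cmd₄(G ∪ A)` consists of exactly
one set `F` and every pair of `A` has both endpoints in `F`. -/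
theorem minimal_completion_single_component {V : Type*} [Fintype V]
    (G : SimpleGraph V) (hK : ∃! K : Set V, IsK4 G K)
    (A : Set (Sym2 V)) (hA : MinCompletionSet G A) :
    ∃ F : Set V, Cmd (addEdges G A) Set.univ 4 F ∧
      (∀ F' : Set V, Cmd (addEdges G A) Set.univ 4 F' → F' = F) ∧
      ∀ e ∈ A, ∀ x : V, x ∈ e → x ∈ F := by
  obtain ⟨⟨hdiag, hnedge, hPF⟩, hMin⟩ := hA
  obtain ⟨K0, hK0, hK0uniq⟩ := hK
  have hHadj : ∀ u w : V, (addEdges G A).Adj u w ↔ G.Adj u w ∨ (s(u, w) ∈ A ∧ u ≠ w) := by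
    intro u w
    simp [addEdges, SimpleGraph.fromEdgeSet_adj, SimpleGraph.sup_adj]
  have hGH : ∀ {u w : V}, G.Adj u w → (addEdges G A).Adj u w :=
    fun h => (hHadj _ _).mpr (Or.inl h)
  have hK0H : IsK4 (addEdges G A) K0 :=
    ⟨hK0.1, fun u hu w hw hne => hGH (hK0.2 u hu w hw hne)⟩
  have hSne : ({F : Set V | K0 ⊆ F ∧ CMPAtLeast (addEdges G A) F 4}).Nonempty :=
    ⟨K0, subset_rfl, cmpAtLeast_of_isK4 _ _ (Set.toFinite _) hK0H⟩
  obtain ⟨F, hFS, hFmaxi⟩ := Set.Finite.exists_maximalFor Set.ncard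
    {F : Set V | K0 ⊆ F ∧ CMPAtLeast (addEdges G A) F 4} (Set.toFinite _) hSne
  have hFK0 : K0 ⊆ F := hFS.1
  have hFcmp : CMPAtLeast (addEdges G A) F 4 := hFS.2
  have hFmax : ∀ F'', F'' ⊆ Set.univ → F ⊆ F'' →
      CMPAtLeast (addEdges G A) F'' 4 → F'' = F := by
    intro F'' _ hsub hcmp
    have h1 : F'' ∈ {F : Set V | K0 ⊆ F ∧ CMPAtLeast (addEdges G A) F 4} :=
      ⟨hFK0.trans hsub, hcmp⟩
    have h2 : F.ncard ≤ F''.ncard := Set.ncard_le_ncard hsub (Set.toFinite _)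
    have h3 := hFmaxi h1 h2
    exact (Set.eq_of_subset_of_ncard_le hsub h3 (Set.toFinite _)).symm
  have absorb : ∀ v x y : V, x ∈ F → y ∈ F → (addEdges G A).Adj x y →
      (addEdges G A).Adj v x → (addEdges G A).Adj v y → v ∈ F :=
    fun v x y hx hy hxy hvx hvy =>
      absorb_max _ hPF F hFcmp hFmax v x y hx hy hxy hvx hvy
  set A₀ : Set (Sym2 V) := {e ∈ A | ∀ z ∈ e, z ∈ F} with hA₀def
  have hA₀A : A₀ ⊆ A := fun e he => he.1
  have hH₀adj : ∀ u w : V,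
      (addEdges G A₀).Adj u w ↔ G.Adj u w ∨ (s(u, w) ∈ A₀ ∧ u ≠ w) := by
    intro u w
    simp [addEdges, SimpleGraph.fromEdgeSet_adj, SimpleGraph.sup_adj]
  have hH₀H : ∀ u w : V, (addEdges G A₀).Adj u w → (addEdges G A).Adj u w := by
    intro u w h
    rcases (hH₀adj u w).mp h with h | ⟨h1, h2⟩
    · exact hGH h
    · exact (hHadj u w).mpr (Or.inr ⟨hA₀A h1, h2⟩)
  have K4inF : ∀ Q : Set V, IsK4 (addEdges G A₀) Q → Q ⊆ F := by
    intro Q hQ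
    by_cases hall : ∀ u ∈ Q, ∀ w ∈ Q, u ≠ w → G.Adj u w
    · have hQG : IsK4 G Q := ⟨hQ.1, hall⟩
      exact (hK0uniq Q hQG) ▸ hFK0
    · push_neg at hall
      obtain ⟨p, hpQ, q, hqQ, hpq, hnG⟩ := hall
      have hH₀pq : (addEdges G A₀).Adj p q := hQ.2 p hpQ q hqQ hpq
      have heA₀ : s(p, q) ∈ A₀ := by
        rcases (hH₀adj p q).mp hH₀pq with h | ⟨h1, _⟩
        · exact absurd h hnG
        · exact h1
      have hpF : p ∈ F := heA₀.2 p (Sym2.mem_mk_left p q)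
      have hqF : q ∈ F := heA₀.2 q (Sym2.mem_mk_right p q)
      have hHpq : (addEdges G A).Adj p q := hH₀H _ _ hH₀pq
      intro w hwQ
      by_cases hwp : w = p
      · exact hwp ▸ hpF
      by_cases hwq : w = q
      · exact hwq ▸ hqF
      exact absorb w p q hpF hqF hHpq (hH₀H _ _ (hQ.2 w hwQ p hpQ hwp))
        (hH₀H _ _ (hQ.2 w hwQ q hqQ hwq))
  have hPF₀ : PrisonFree (addEdges G A₀) := by
    rintro ⟨Pset, f, hrange, hiff⟩
    have hQK4 : IsK4 (addEdges G A₀) {f 0, f 1, f 2, f 3} := by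
      constructor
      · exact ncard_four (f.injective.ne (by decide)) (f.injective.ne (by decide))
          (f.injective.ne (by decide)) (f.injective.ne (by decide))
          (f.injective.ne (by decide)) (f.injective.ne (by decide))
      · intro u hu w hw hne
        simp only [Set.mem_insert_iff, Set.mem_singleton_iff] at hu hw
        rcases hu with rfl | rfl | rfl | rfl <;> rcases hw with rfl | rfl | rfl | rfl <;>
          first
            | exact absurd rfl hne
            | exact (hiff _ _).mpr (by decide)
    have hQF := K4inF _ hQK4
    have hf0F : f 0 ∈ F := hQF (by simp)
    have hf1F : f 1 ∈ F := hQF (by simp)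
    have hf2F : f 2 ∈ F := hQF (by simp)
    have hf3F : f 3 ∈ F := hQF (by simp)
    have h01 : (addEdges G A₀).Adj (f 0) (f 1) := (hiff 0 1).mpr (by decide)
    have hu0 : (addEdges G A₀).Adj (f 4) (f 0) := (hiff 4 0).mpr (by decide)
    have hu1 : (addEdges G A₀).Adj (f 4) (f 1) := (hiff 4 1).mpr (by decide)
    have hf4F : f 4 ∈ F := absorb (f 4) (f 0) (f 1) hf0F hf1F (hH₀H _ _ h01)
      (hH₀H _ _ hu0) (hH₀H _ _ hu1)
    have hn42 : ¬ (addEdges G A₀).Adj (f 4) (f 2) := by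
      intro h
      have h' := (hiff 4 2).mp h
      revert h'
      decide
    have hn43 : ¬ (addEdges G A₀).Adj (f 4) (f 3) := by
      intro h
      have h' := (hiff 4 3).mp h
      revert h'
      decide
    have hdisj : (addEdges G A).Adj (f 4) (f 2) ∨ (addEdges G A).Adj (f 4) (f 3) := by
      by_contra hcon
      push_neg at hcon
      apply hPF
      refine ⟨Set.range f, f, rfl, ?_⟩
      intro a b
      constructor
      · intro hadj
        by_contra hnp
        have hcases : ∀ a b : Fin 5, ¬ prison.Adj a b →
            a = b ∨ (a = 4 ∧ b = 2) ∨ (a = 4 ∧ b = 3) ∨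
            (a = 2 ∧ b = 4) ∨ (a = 3 ∧ b = 4) := by decide
        rcases hcases a b hnp with rfl | ⟨rfl, rfl⟩ | ⟨rfl, rfl⟩ | ⟨rfl, rfl⟩ | ⟨rfl, rfl⟩
        · exact hadj.ne rfl
        · exact hcon.1 hadj
        · exact hcon.2 hadj
        · exact hcon.1 hadj.symm
        · exact hcon.2 hadj.symm
      · intro hp
        exact hH₀H _ _ ((hiff a b).mpr hp)
    rcases hdisj with h | h
    · rcases (hHadj _ _).mp h with hg | ⟨hmem, hne⟩
      · exact hn42 ((hH₀adj _ _).mpr (Or.inl hg))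
      · have hmem₀ : s(f 4, f 2) ∈ A₀ := by
          refine ⟨hmem, ?_⟩
          intro z hz
          rcases Sym2.mem_iff.mp hz with rfl | rfl
          exacts [hf4F, hf2F]
        exact hn42 ((hH₀adj _ _).mpr (Or.inr ⟨hmem₀, hne⟩))
    · rcases (hHadj _ _).mp h with hg | ⟨hmem, hne⟩
      · exact hn43 ((hH₀adj _ _).mpr (Or.inl hg))
      · have hmem₀ : s(f 4, f 3) ∈ A₀ := by
          refine ⟨hmem, ?_⟩
          intro z hz
          rcases Sym2.mem_iff.mp hz with rfl | rfl
          exacts [hf4F, hf3F]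
        exact hn43 ((hH₀adj _ _).mpr (Or.inr ⟨hmem₀, hne⟩))
  have hA₀eq : A₀ = A := by
    by_contra hne
    exact hMin A₀ (hA₀A.ssubset_of_ne hne)
      ⟨fun e he => hdiag e (hA₀A he), fun e he => hnedge e (hA₀A he), hPF₀⟩
  have hAF : ∀ e ∈ A, ∀ z : V, z ∈ e → z ∈ F := by
    intro e he
    have he₀ : e ∈ A₀ := hA₀eq ▸ he
    exact he₀.2
  have K4inF' : ∀ Q : Set V, IsK4 (addEdges G A) Q → Q ⊆ F := by
    rw [← hA₀eq]
    exact K4inF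
  refine ⟨F, ⟨Set.subset_univ F, hFcmp, hFmax⟩, ?_, hAF⟩
  intro F' hF'
  obtain ⟨-, ⟨P', hP', f', hf'⟩, hmax'⟩ := hF'
  choose qv hqv using fun i : Fin 4 => (hP'.1 _ (hf' i)).1
  have hadjq : ∀ i j : Fin 4, i ≠ j → (addEdges G A).Adj (qv i) (qv j) :=
    fun i j hij => hP'.adj_of_ne (hf' i) (hf' j) (hqv i) (hqv j)
      (fun h => hij (f'.injective h))
  have hQ : IsK4 (addEdges G A) {qv 0, qv 1, qv 2, qv 3} := by
    constructor
    · exact ncard_four (hadjq 0 1 (by decide)).ne (hadjq 0 2 (by decide)).ne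
        (hadjq 0 3 (by decide)).ne (hadjq 1 2 (by decide)).ne
        (hadjq 1 3 (by decide)).ne (hadjq 2 3 (by decide)).ne
    · intro u hu w hw hne
      simp only [Set.mem_insert_iff, Set.mem_singleton_iff] at hu hw
      rcases hu with rfl | rfl | rfl | rfl <;> rcases hw with rfl | rfl | rfl | rfl <;>
        first
          | exact absurd rfl hne
          | exact hadjq _ _ (by decide)
  have hQF := K4inF' _ hQ
  have hmemQ : ∀ i : Fin 4, qv i ∈ ({qv 0, qv 1, qv 2, qv 3} : Set V) := by
    intro i
    fin_cases i <;> simp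
  have hsub : F' ⊆ F := by
    intro w hw
    obtain ⟨Cw, hCw, hwCw⟩ := hP'.mem_class hw
    obtain ⟨i, j, hi, -, hj, -, hij⟩ := pick_two f' Cw Cw
    have h1 : (addEdges G A).Adj w (qv i) :=
      hP'.adj_of_ne hCw (hf' i) hwCw (hqv i) (Ne.symm hi)
    have h2 : (addEdges G A).Adj w (qv j) :=
      hP'.adj_of_ne hCw (hf' j) hwCw (hqv j) (Ne.symm hj)
    have h3 : (addEdges G A).Adj (qv i) (qv j) :=
      hP'.adj_of_ne (hf' i) (hf' j) (hqv i) (hqv j) hij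
    exact absorb w (qv i) (qv j) (hQF (hmemQ i)) (hQF (hmemQ j)) h3 h1 h2
  exact (hmax' F (Set.subset_univ F) hsub hFcmp).symm

end PrisonFreePaper
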